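/- Assume θ_i = 0 for all i, common maximum data size d^max > 0, and users ordered so that (ξ_1 ℓ_1)^{-1} - ε_1 < (ξ_2 ℓ_2)^{-1} - ε_2 < … < (ξ_I ℓ_I)^{-1} - ε_I. Then at any Nash equilibrium d*, the remaining data sizes are ordered: d_1* ≤ d_2* ≤ … ≤ d_I*. -/

import Mathlib

open Finset

/-- Payoff with negligible unlearning costs (`θ_i = 0`). -/
noncomputable def payoff0 {I : ℕ} (ξ ℓ ε : Fin I → ℝ) (i : Fin I)
    (d : Fin I → ℝ) : ℝ :=
  Real.log (∑ j, d j + ε i) - ξ i * ℓ i * d i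

/-- Nash equilibrium of the game with common maximum data size `dmax`. -/
def IsNash0 {I : ℕ} (ξ ℓ ε : Fin I → ℝ) (dmax : ℝ) (d : Fin I → ℝ) : Prop :=
  ∀ i : Fin I, ∀ x ∈ Set.Icc (0 : ℝ) dmax,
    payoff0 ξ ℓ ε i (Function.update d i x) ≤ payoff0 ξ ℓ ε i d

lemma sum_update_eq' {I : ℕ} (d : Fin I → ℝ) (i : Fin I) (x : ℝ) :
    ∑ j, Function.update d i x j = ∑ j, d j + (x - d i) := by
  rw [Finset.sum_update_of_mem (Finset.mem_univ i),
    ← Finset.add_sum_erase _ d (Finset.mem_univ i), Finset.erase_eq]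
  ring

lemma payoff0_update {I : ℕ} (ξ ℓ ε : Fin I → ℝ) (i : Fin I) (d : Fin I → ℝ) (x : ℝ) :
    payoff0 ξ ℓ ε i (Function.update d i x) =
      Real.log (∑ j, d j + (x - d i) + ε i) - ξ i * ℓ i * x := by
  unfold payoff0
  rw [sum_update_eq', Function.update_self]

theorem stmt10 (I : ℕ) (ξ ℓ ε : Fin I → ℝ) (dmax : ℝ)
    (hξ : ∀ i, 0 < ξ i) (hℓ : ∀ i, 0 < ℓ i) (hε : ∀ i, 0 < ε i)
    (hdmax : 0 < dmax)
    (horder : ∀ i j : Fin I, i < j →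
      (ξ i * ℓ i)⁻¹ - ε i < (ξ j * ℓ j)⁻¹ - ε j)
    (d : Fin I → ℝ) (hd : ∀ j, d j ∈ Set.Icc (0 : ℝ) dmax)
    (hne : IsNash0 ξ ℓ ε dmax d) :
    ∀ i j : Fin I, i < j → d i ≤ d j := by
  have hS0 : (0:ℝ) ≤ ∑ j, d j :=
    Finset.sum_nonneg fun j _ => (hd j).1
  -- upper: d i > 0 → S + ε i ≤ (ξ i * ℓ i)⁻¹
  have upper : ∀ i : Fin I, 0 < d i → (∑ j, d j) + ε i ≤ (ξ i * ℓ i)⁻¹ := by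
    intro i hdi
    by_contra hcon
    push_neg at hcon
    have hcpos : 0 < ξ i * ℓ i := mul_pos (hξ i) (hℓ i)
    have hicpos : 0 < (ξ i * ℓ i)⁻¹ := inv_pos.mpr hcpos
    set c := ξ i * ℓ i with hc
    set E := (∑ j, d j) + ε i with hE
    have hEpos : 0 < E := by have := hε i; linarith
    have hcE : c⁻¹ < E := hcon
    set δ : ℝ := min (d i) ((E - c⁻¹) / 2) with hδ
    have hδpos : 0 < δ := lt_min hdi (by linarith)
    have hδdi : δ ≤ d i := min_le_left _ _
    have hδle : δ ≤ (E - c⁻¹) / 2 := min_le_right _ _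
    have hgt : c⁻¹ < E - δ := by linarith
    have hEδpos : 0 < E - δ := by linarith
    have hx : d i - δ ∈ Set.Icc (0:ℝ) dmax :=
      ⟨by linarith, by linarith [(hd i).2]⟩
    have hnash := hne i _ hx
    rw [payoff0_update] at hnash
    unfold payoff0 at hnash
    rw [← hc, ← hE] at hnash
    have hsum : E - ε i + (d i - δ - d i) + ε i = E - δ := by ring
    rw [show (∑ j, d j) = E - ε i from by rw [hE]; ring, hsum] at hnash
    -- hnash : log (E - δ) - c * (d i - δ) ≤ log E - c * d i
    have hlog : Real.log E - Real.log (E - δ) ≤ δ / (E - δ) := by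
      rw [← Real.log_div (ne_of_gt hEpos) (ne_of_gt hEδpos)]
      have := Real.log_le_sub_one_of_pos (show 0 < E / (E - δ) by positivity)
      have h2 : E / (E - δ) - 1 = δ / (E - δ) := by field_simp; ring
      linarith
    have h3 : c * δ ≤ δ / (E - δ) := by linarith
    rw [le_div_iff₀ hEδpos] at h3
    -- h3 : c * δ * (E - δ) ≤ δ
    have hmul : 1 < c * (E - δ) := by
      have := mul_lt_mul_of_pos_left hgt hcpos
      rwa [mul_inv_cancel₀ (ne_of_gt hcpos)] at this
    nlinarith [mul_pos hδpos (show 0 < c * (E - δ) - 1 by linarith)]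
  -- lower : d i < dmax → (ξ i * ℓ i)⁻¹ ≤ S + ε i
  have lower : ∀ i : Fin I, d i < dmax → (ξ i * ℓ i)⁻¹ ≤ (∑ j, d j) + ε i := by
    intro i hdi
    by_contra hcon
    push_neg at hcon
    have hcpos : 0 < ξ i * ℓ i := mul_pos (hξ i) (hℓ i)
    set c := ξ i * ℓ i with hc
    set E := (∑ j, d j) + ε i with hE
    have hEpos : 0 < E := by have := hε i; linarith
    have hcE : E < c⁻¹ := hcon
    set δ : ℝ := min (dmax - d i) ((c⁻¹ - E) / 2) with hδ
    have hδpos : 0 < δ := lt_min (by linarith) (by linarith)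
    have hδle : δ ≤ (c⁻¹ - E) / 2 := min_le_right _ _
    have hlt : E + δ < c⁻¹ := by linarith
    have hEδpos : 0 < E + δ := by linarith
    have hx : d i + δ ∈ Set.Icc (0:ℝ) dmax :=
      ⟨by linarith [(hd i).1], by linarith [min_le_left (dmax - d i) ((c⁻¹ - E)/2)]⟩
    have hnash := hne i _ hx
    rw [payoff0_update] at hnash
    unfold payoff0 at hnash
    rw [← hc, ← hE] at hnash
    have hsum : E - ε i + (d i + δ - d i) + ε i = E + δ := by ring
    rw [show (∑ j, d j) = E - ε i from by rw [hE]; ring, hsum] at hnash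
    have hlog : δ / (E + δ) ≤ Real.log (E + δ) - Real.log E := by
      rw [← Real.log_div (ne_of_gt hEδpos) (ne_of_gt hEpos)]
      have h1 := Real.log_le_sub_one_of_pos (show 0 < E / (E + δ) by positivity)
      have h2 : Real.log (E / (E + δ)) = - Real.log ((E + δ)/E) := by
        rw [← Real.log_inv]; congr 1
        rw [inv_div]
      rw [h2] at h1
      have h3 : E / (E + δ) - 1 = -(δ / (E + δ)) := by field_simp; ring
      linarith
    have h3 : δ / (E + δ) ≤ c * δ := by linarith
    rw [div_le_iff₀ hEδpos] at h3
    -- h3 : δ ≤ c * δ * (E + δ)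
    have hmul : c * (E + δ) < 1 := by
      have := mul_lt_mul_of_pos_left hlt hcpos
      rwa [mul_inv_cancel₀ (ne_of_gt hcpos)] at this
    nlinarith [mul_pos hδpos (show 0 < 1 - c * (E + δ) by linarith)]
  intro i j hij
  by_contra h
  push_neg at h
  have hdi0 : 0 < d i := lt_of_le_of_lt (hd j).1 h
  have hdj : d j < dmax := lt_of_lt_of_le h (hd i).2
  have h1 := upper i hdi0
  have h2 := lower j hdj
  have h3 := horder i j hij
  linarith
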